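/- Let n ≥ 1, let x_1, ..., x_n be real numbers and α_1, ..., α_n real numbers with ∑_{i=1}^n α_i = 1. Then ∑_{i,j=1}^n α_i α_j |x_i - x_j| ≤ (1/2) · max_{1 ≤ i,j ≤ n} |x_i - x_j|. -/

import Mathlib

open MeasureTheory

theorem stmt_1 (n : ℕ) (hn : 1 ≤ n) (x α : ℕ → ℝ)
    (hsum : ∑ i ∈ Finset.Icc 1 n, α i = 1) :
    ∑ i ∈ Finset.Icc 1 n, ∑ j ∈ Finset.Icc 1 n, α i * α j * |x i - x j| ≤
      (1 / 2) *
        ((Finset.Icc 1 n ×ˢ Finset.Icc 1 n).sup'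
          ((Finset.nonempty_Icc.mpr hn).product (Finset.nonempty_Icc.mpr hn))
          fun p => |x p.1 - x p.2|) := by
  set I := Finset.Icc 1 n with hI
  have hne : I.Nonempty := Finset.nonempty_Icc.mpr hn
  set m := I.inf' hne x with hm
  set M := I.sup' hne x with hM
  have hmM : m ≤ M := by
    obtain ⟨a, ha⟩ := hne
    exact le_trans (Finset.inf'_le x ha) (Finset.le_sup' x ha)
  set u : ℕ → ℝ → ℝ := fun i => (Set.Ici (x i)).indicator (fun _ => (1:ℝ)) with hu
  set g : ℕ → ℕ → ℝ → ℝ :=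
    fun i j => (Set.Ico (min (x i) (x j)) (max (x i) (x j))).indicator (fun _ => (1:ℝ)) with hg
  set F : ℝ → ℝ := fun t => ∑ i ∈ I, α i * u i t with hF
  -- pointwise identity
  have hpt : ∀ i j t, g i j t = (u i t - u j t) ^ 2 := by
    intro i j t
    simp only [hg, hu, Set.indicator, Set.mem_Ico, Set.mem_Ici]
    by_cases h1 : x i ≤ t <;> by_cases h2 : x j ≤ t <;>
      simp [h1, h2, min_le_iff, lt_max_iff, not_le.mp, not_le]
  have hgint : ∀ i j, Integrable (g i j) := by
    intro i j
    exact (integrable_indicator_iff measurableSet_Ico).2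
      (integrableOn_const measure_Ico_lt_top.ne enorm_ne_top)
  have hgval : ∀ i j, (∫ t, g i j t) = |x i - x j| := by
    intro i j
    rw [hg]
    rw [MeasureTheory.integral_indicator_const (1:ℝ) measurableSet_Ico, Real.volume_real_Ico_of_le (min_le_max), smul_eq_mul, mul_one,
      max_sub_min_eq_abs, abs_sub_comm]
  have hu2 : ∀ i t, u i t ^ 2 = u i t := by
    intro i t
    simp only [hu, Set.indicator]
    split_ifs <;> norm_num
  -- rewrite LHS as an integral
  have hLHS : ∑ i ∈ I, ∑ j ∈ I, α i * α j * |x i - x j|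
      = ∫ t, ∑ i ∈ I, ∑ j ∈ I, α i * α j * g i j t := by
    rw [MeasureTheory.integral_finset_sum I
      (fun i _ => integrable_finset_sum I fun j _ => ((hgint i j).const_mul _))]
    refine Finset.sum_congr rfl fun i _ => ?_
    rw [MeasureTheory.integral_finset_sum I (fun j _ => ((hgint i j).const_mul _))]
    refine Finset.sum_congr rfl fun j _ => ?_
    rw [integral_const_mul, hgval]
  -- pointwise value of the double sum
  have key : ∀ t, ∑ i ∈ I, ∑ j ∈ I, α i * α j * g i j t = 2 * F t - 2 * F t ^ 2 := by
    intro t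
    have h1 : ∀ i j, α i * α j * g i j t
        = α i * u i t * α j + α i * (α j * u j t) - 2 * ((α i * u i t) * (α j * u j t)) := by
      intro i j
      rw [hpt, sub_sq, hu2, hu2]; ring
    simp only [h1, Finset.sum_sub_distrib, Finset.sum_add_distrib, ← Finset.mul_sum,
      ← Finset.sum_mul, hsum, hF]
    ring
  -- pointwise bound
  set h : ℝ → ℝ := (Set.Ico m M).indicator (fun _ => (1/2 : ℝ)) with hh
  have hbd : ∀ t, 2 * F t - 2 * F t ^ 2 ≤ h t := by
    intro t
    by_cases ht : t ∈ Set.Ico m M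
    · rw [hh, Set.indicator_of_mem ht]
      nlinarith [sq_nonneg (2 * F t - 1)]
    · rw [hh, Set.indicator_of_notMem ht]
      rw [Set.mem_Ico, not_and_or, not_le, not_lt] at ht
      rcases ht with ht | ht
      · have hF0 : F t = 0 := by
          rw [hF]
          refine Finset.sum_eq_zero fun i hi => ?_
          have hxi : ¬ x i ≤ t := not_le.mpr (lt_of_lt_of_le ht (Finset.inf'_le x hi))
          simp [hu, Set.indicator, Set.mem_Ici, hxi]
        rw [hF0]; norm_num
      · have hF1 : F t = 1 := by
          rw [hF, ← hsum]
          refine Finset.sum_congr rfl fun i hi => ?_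
          have hxi : x i ≤ t := le_trans (Finset.le_sup' x hi) ht
          simp [hu, Set.indicator, Set.mem_Ici, hxi]
        rw [hF1]; norm_num
  have hInt1 : Integrable (fun t => ∑ i ∈ I, ∑ j ∈ I, α i * α j * g i j t) :=
    integrable_finset_sum I fun i _ => integrable_finset_sum I fun j _ => ((hgint i j).const_mul _)
  have hInt2 : Integrable h :=
    (integrable_indicator_iff measurableSet_Ico).2
      (integrableOn_const measure_Ico_lt_top.ne enorm_ne_top)
  have hIle : (∫ t, ∑ i ∈ I, ∑ j ∈ I, α i * α j * g i j t) ≤ ∫ t, h t := by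
    refine integral_mono hInt1 hInt2 fun t => ?_
    rw [key t]; exact hbd t
  have hIval : (∫ t, h t) = (1/2) * (M - m) := by
    rw [hh, MeasureTheory.integral_indicator_const ((1/2 : ℝ)) measurableSet_Ico,
      Real.volume_real_Ico_of_le hmM, smul_eq_mul, mul_comm]
  -- compare with the sup'
  obtain ⟨i₀, hi₀, hix⟩ := Finset.exists_mem_eq_sup' hne x
  obtain ⟨j₀, hj₀, hjx⟩ := Finset.exists_mem_eq_inf' hne x
  have hMm : M - m ≤ |x i₀ - x j₀| := by
    rw [hM, hm, ← hix, ← hjx] at *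
    exact le_abs_self _
  have hsup : |x i₀ - x j₀| ≤ (I ×ˢ I).sup'
      ((Finset.nonempty_Icc.mpr hn).product (Finset.nonempty_Icc.mpr hn))
      (fun p => |x p.1 - x p.2|) :=
    Finset.le_sup' (f := fun p : ℕ × ℕ => |x p.1 - x p.2|)
      (Finset.mem_product.2 ⟨hi₀, hj₀⟩ : (i₀, j₀) ∈ I ×ˢ I)
  calc ∑ i ∈ I, ∑ j ∈ I, α i * α j * |x i - x j|
      = ∫ t, ∑ i ∈ I, ∑ j ∈ I, α i * α j * g i j t := hLHS
    _ ≤ ∫ t, h t := hIle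
    _ = (1/2) * (M - m) := hIval
    _ ≤ _ := by
        have h2 : M - m ≤ (I ×ˢ I).sup'
            ((Finset.nonempty_Icc.mpr hn).product (Finset.nonempty_Icc.mpr hn))
            (fun p => |x p.1 - x p.2|) := le_trans hMm hsup
        linarith
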